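/- Let a_1, …, a_n ∈ ℝ^N (n ≥ 2) be linearly independent. Let A_n be the n×N matrix whose s-th row is a_sᵀ, G_n := A_n A_nᵀ, and Q_n := A_nᵀ · adj(G_n) · A_n. For each s, let Q_1^s := a_s a_sᵀ, let Q^{s̄} be the quasi projector built in the same way from the n−1 vectors {a_t : t ≠ s}, and let (v^{s̄})² be the determinant of the Gram matrix of {a_t : t ≠ s}. Then Q_n = Σ_{s=1}^n Q_1^s · ((v^{s̄})² I − Q^{s̄}). -/

import Mathlib

open Matrix BigOperators

/-- The quasi projector of the vectors arranged as the rows of `B`: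
`Bᵀ · adj(BBᵀ) · B`. -/
noncomputable def quasiOf {ι : Type*} [Fintype ι] [DecidableEq ι] {N : ℕ}
    (B : Matrix ι (Fin N) ℝ) : Matrix (Fin N) (Fin N) ℝ :=
  Bᵀ * (B * Bᵀ).adjugate * B

/-- The matrix whose rows are all vectors `a_t` with `t ≠ s`. -/
def matBar {n N : ℕ} (a : Fin n → Fin N → ℝ) (s : Fin n) :
    Matrix {t : Fin n // t ≠ s} (Fin N) ℝ :=
  Matrix.of fun t => a t.1

/-- The Gram matrix of a linearly independent family has invertible determinant. -/
lemma gram_isUnit {ι : Type*} [Fintype ι] [DecidableEq ι] {N : ℕ}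
    {B : Matrix ι (Fin N) ℝ} (h : LinearIndependent ℝ (fun i => B i)) :
    IsUnit (B * Bᵀ).det := by
  rw [isUnit_iff_ne_zero]
  intro h0
  obtain ⟨v, hv, hmv⟩ := Matrix.exists_mulVec_eq_zero_iff.mpr h0
  have hw : (Bᵀ *ᵥ v) ⬝ᵥ (Bᵀ *ᵥ v) = 0 := by
    rw [dotProduct_mulVec, ← mulVec_transpose, mulVec_mulVec, transpose_transpose, hmv]
    simp
  have hw0 : Bᵀ *ᵥ v = 0 := dotProduct_self_eq_zero.mp hw
  have := Fintype.linearIndependent_iff.mp h v ?_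
  · exact hv (funext this)
  · funext j
    have := congrFun hw0 j
    simpa [mulVec, dotProduct, Finset.sum_apply, mul_comm] using this

/-- Schur-type determinant expansion of `M.det` around the entry `M s s`. -/
lemma schur_det {n : ℕ} (M : Matrix (Fin n) (Fin n) ℝ) (s : Fin n)
    (hMs : IsUnit (M.submatrix (Subtype.val : {t : Fin n // t ≠ s} → Fin n) Subtype.val).det) :
    M.det = (M.submatrix (Subtype.val : {t : Fin n // t ≠ s} → Fin n) Subtype.val).det * M s s
      - ∑ t : {t : Fin n // t ≠ s}, ∑ w : {t : Fin n // t ≠ s},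
          M s t.1 * (M.submatrix (Subtype.val : {t : Fin n // t ≠ s} → Fin n) Subtype.val).adjugate t w * M w.1 s := by
  set Ms := M.submatrix (Subtype.val : {t : Fin n // t ≠ s} → Fin n) Subtype.val with hMsdef
  have hf : Function.Bijective (Sum.elim (Subtype.val : {t : Fin n // t ≠ s} → Fin n) (fun _ : Unit => s)) := by
    constructor
    · rintro (⟨x,hx⟩|⟨⟩) (⟨y,hy⟩|⟨⟩) h
      · exact congrArg Sum.inl (Subtype.ext h)
      · exact absurd h hx
      · exact absurd h.symm hy
      · rfl
    · intro x
      by_cases hx : x = s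
      · exact ⟨Sum.inr (), hx.symm⟩
      · exact ⟨Sum.inl ⟨x, hx⟩, rfl⟩
  let e := Equiv.ofBijective _ hf
  have hdet : M.det = (M.submatrix e e).det := (Matrix.det_submatrix_equiv_self e M).symm
  have hblock : M.submatrix ⇑e ⇑e = fromBlocks Ms (Matrix.of fun t (_ : Unit) => M t.1 s)
      (Matrix.of fun (_ : Unit) w => M s w.1) (Matrix.of fun (_ : Unit) (_ : Unit) => M s s) := by
    ext i j
    cases i <;> cases j <;> rfl
  haveI : Invertible Ms := Matrix.invertibleOfIsUnitDet Ms hMs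
  have hd : Ms.det ≠ 0 := by
    intro h; rw [h] at hMs; simp at hMs
  have hdet1 : ∀ (X : Matrix Unit Unit ℝ), X.det = X () () := fun X => Matrix.det_unique X
  have hE : (((Matrix.of fun (_ : Unit) (w : {t : Fin n // t ≠ s}) => M s w.1) * Ms⁻¹ *
        (Matrix.of fun (t : {t : Fin n // t ≠ s}) (_ : Unit) => M t.1 s)) () ()) =
      Ms.det⁻¹ * ∑ t : {t : Fin n // t ≠ s}, ∑ w : {t : Fin n // t ≠ s},
        M s t.1 * Ms.adjugate t w * M w.1 s := by
    simp only [mul_apply, of_apply, Matrix.inv_def, Ring.inverse_eq_inv', Matrix.smul_apply, smul_eq_mul]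
    rw [Finset.mul_sum]
    simp only [Finset.sum_mul]
    rw [Finset.sum_comm]
    apply Finset.sum_congr rfl
    intro t _
    rw [Finset.mul_sum]
    apply Finset.sum_congr rfl
    intro w _
    ring
  rw [hdet, hblock, Matrix.det_fromBlocks₁₁, invOf_eq_nonsing_inv, hdet1, Matrix.sub_apply, hE, of_apply]
  field_simp

/-- The entries of the row `s` of the adjugate of the Gram matrix, in terms of
the Gram data of the family with `a s` removed. -/
lemma adj_row {n N : ℕ} (a : Fin n → Fin N → ℝ) (ha : LinearIndependent ℝ a)
    (s u : Fin n) :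
    (Matrix.of a * (Matrix.of a)ᵀ).adjugate s u =
      if h : u = s then (matBar a s * (matBar a s)ᵀ).det
      else -∑ t : {t : Fin n // t ≠ s}, (Matrix.of a * (Matrix.of a)ᵀ) s t.1 *
             (matBar a s * (matBar a s)ᵀ).adjugate t ⟨u, h⟩ := by
  set G := Matrix.of a * (Matrix.of a)ᵀ with hGdef
  set Gs := matBar a s * (matBar a s)ᵀ with hGsdef
  have hG : IsUnit G.det := gram_isUnit ha
  have hGs : IsUnit Gs.det := gram_isUnit (ha.comp _ Subtype.val_injective)
  have hsubm : Gs = G.submatrix (Subtype.val : {t : Fin n // t ≠ s} → Fin n) Subtype.val := rfl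
  set c : Fin n → ℝ := fun v =>
    if h : v = s then Gs.det
    else -∑ t : {t : Fin n // t ≠ s}, G s t.1 * Gs.adjugate t ⟨v, h⟩ with hc
  have hrow : c ᵥ* G = (fun v => G.adjugate s v) ᵥ* G := by
    funext x
    rw [show ((fun v => G.adjugate s v) ᵥ* G) x = (G.adjugate * G) s x from rfl,
        Matrix.adjugate_mul]
    simp only [Matrix.smul_apply, one_apply, smul_eq_mul]
    show ∑ w, c w * G w x = _
    rw [← Finset.add_sum_erase _ _ (Finset.mem_univ s)]
    rw [Finset.sum_subtype (p := fun t => t ≠ s) (Finset.univ.erase s)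
      (fun y => by simp [Finset.mem_erase]) (fun w => c w * G w x)]
    have hcs : c s = Gs.det := by simp [hc]
    have hcw : ∀ w : {t : Fin n // t ≠ s},
        c w.1 = -∑ t : {t : Fin n // t ≠ s}, G s t.1 * Gs.adjugate t w := by
      intro w
      have hw2 : (w : Fin n) ≠ s := w.2
      simp only [hc, dif_neg hw2]
    rw [hcs]
    simp only [hcw]
    by_cases hx : x = s
    · subst hx
      rw [if_pos rfl, mul_one, schur_det G x (hsubm ▸ hGs), ← hsubm]
      simp only [neg_mul, Finset.sum_mul, Finset.sum_neg_distrib]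
      rw [Finset.sum_comm, sub_eq_add_neg]
    · rw [if_neg (fun h => hx h.symm), mul_zero]
      have hmulw : ∀ t : {t : Fin n // t ≠ s},
          ∑ w : {t : Fin n // t ≠ s}, Gs.adjugate t w * G w.1 x
            = Gs.det * (if t = ⟨x, hx⟩ then 1 else 0) := by
        intro t
        have h2 := congrFun (congrFun (Matrix.adjugate_mul Gs) t) ⟨x, hx⟩
        simp [mul_apply, Matrix.smul_apply, one_apply] at h2
        rw [mul_ite, mul_one, mul_zero]
        exact h2
      simp only [neg_mul, Finset.sum_mul, Finset.sum_neg_distrib]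
      rw [Finset.sum_comm]
      have : ∀ t : {t : Fin n // t ≠ s},
          ∑ w : {t : Fin n // t ≠ s}, G s t.1 * Gs.adjugate t w * G w.1 x
            = G s t.1 * (Gs.det * (if t = ⟨x, hx⟩ then 1 else 0)) := by
        intro t
        rw [← hmulw t, Finset.mul_sum]
        exact Finset.sum_congr rfl fun w _ => by ring
      simp only [this, mul_ite, mul_one, mul_zero, Finset.sum_ite_eq', Finset.mem_univ,
        if_true]
      ring
  have hcancel : c = fun v => G.adjugate s v := by
    have h1 := congrArg (fun v => v ᵥ* G⁻¹) hrow
    simpa [Matrix.vecMul_vecMul, Matrix.mul_nonsing_inv G hG] using h1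
  exact (congrFun hcancel u).symm

lemma quasi_entry {n N : ℕ} (a : Fin n → Fin N → ℝ) (i j : Fin N) :
    quasiOf (Matrix.of a) i j
      = ∑ s : Fin n, a s i * ∑ u : Fin n, (Matrix.of a * (Matrix.of a)ᵀ).adjugate s u * a u j := by
  simp only [quasiOf, mul_apply, transpose_apply, of_apply]
  simp only [Finset.sum_mul]
  rw [Finset.sum_comm]
  apply Finset.sum_congr rfl
  intro s _
  rw [Finset.mul_sum]
  apply Finset.sum_congr rfl
  intro u _
  ring

lemma quasi_bar_entry {n N : ℕ} (a : Fin n → Fin N → ℝ) (s : Fin n) (j : Fin N) :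
    ∑ k : Fin N, a s k * quasiOf (matBar a s) k j
      = ∑ t : {t : Fin n // t ≠ s}, ∑ w : {t : Fin n // t ≠ s},
          (Matrix.of a * (Matrix.of a)ᵀ) s t.1 *
            (matBar a s * (matBar a s)ᵀ).adjugate t w * a w.1 j := by
  simp only [quasiOf, mul_apply, transpose_apply, matBar, of_apply, Finset.mul_sum,
    Finset.sum_mul]
  rw [Finset.sum_comm]
  refine (Finset.sum_congr rfl fun w _ => Finset.sum_comm).trans ?_
  rw [Finset.sum_comm]
  apply Finset.sum_congr rfl; intro t _
  apply Finset.sum_congr rfl; intro w _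
  apply Finset.sum_congr rfl; intro k _
  ring

/-- Recursive quasi projector: for `n ≥ 2` linearly independent vectors,
`Q_n = Σ_s Q_1^s ((v^{s̄})² I − Q^{s̄})`, where `Q_1^s = a_s a_sᵀ`,
`(v^{s̄})²` is the determinant of the Gram matrix of all vectors but `a_s`,
and `Q^{s̄}` is the quasi projector of all vectors but `a_s`. -/
theorem recursive_quasi_projector {n N : ℕ} (hn : 2 ≤ n)
    (a : Fin n → Fin N → ℝ) (ha : LinearIndependent ℝ a) :
    quasiOf (Matrix.of a) =
      ∑ s : Fin n,
        Matrix.vecMulVec (a s) (a s) *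
          ((matBar a s * (matBar a s)ᵀ).det • (1 : Matrix (Fin N) (Fin N) ℝ) -
            quasiOf (matBar a s)) := by
  ext i j
  rw [Matrix.sum_apply, quasi_entry a i j]
  apply Finset.sum_congr rfl
  intro s _
  have hRentry : (vecMulVec (a s) (a s) *
        ((matBar a s * (matBar a s)ᵀ).det • (1 : Matrix (Fin N) (Fin N) ℝ) -
          quasiOf (matBar a s))) i j
      = a s i * ((matBar a s * (matBar a s)ᵀ).det * a s j
          - ∑ k : Fin N, a s k * quasiOf (matBar a s) k j) := by
    simp only [mul_apply, vecMulVec_apply, Matrix.sub_apply, Matrix.smul_apply, one_apply, smul_eq_mul]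
    simp only [mul_sub, Finset.sum_sub_distrib]
    congr 1
    · simp only [mul_ite, mul_one, mul_zero, Finset.sum_ite_eq', Finset.mem_univ, if_true]
      ring
    · rw [Finset.mul_sum]
      exact Finset.sum_congr rfl fun k _ => by ring
  rw [hRentry]
  congr 1
  rw [quasi_bar_entry a s j]
  rw [← Finset.add_sum_erase _ _ (Finset.mem_univ s),
      Finset.sum_subtype (p := fun t => t ≠ s) (Finset.univ.erase s)
        (fun y => by simp [Finset.mem_erase])
        (fun u => (Matrix.of a * (Matrix.of a)ᵀ).adjugate s u * a u j),
      adj_row a ha s s, dif_pos rfl]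
  have hterm : ∀ u : {t : Fin n // t ≠ s},
      (Matrix.of a * (Matrix.of a)ᵀ).adjugate s u.1 * a u.1 j
        = (-∑ t : {t : Fin n // t ≠ s}, (Matrix.of a * (Matrix.of a)ᵀ) s t.1 *
            (matBar a s * (matBar a s)ᵀ).adjugate t u) * a u.1 j := by
    intro u
    have hu2 : (u : Fin n) ≠ s := u.2
    rw [adj_row a ha s u.1, dif_neg hu2]
  simp only [hterm, neg_mul, Finset.sum_mul, Finset.sum_neg_distrib]
  rw [Finset.sum_comm, sub_eq_add_neg]
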